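/- Sum AMSE transfer from downlink to uplink: in the multiuser MIMO setup, given downlink power allocations P_1,…,P_K, let β̃ = (Σ_{k=1}^K tr(P_k)) / (Σ_{k=1}^K Re tr(P_k⁻¹ α_k²)) and define the uplink power allocations Q_k = β̃·α_k²·P_k⁻¹ for every k. Then the uplink sum AMSE equals the downlink sum AMSE, ξ̄^{UL} = ξ̄^{DL}, and the same sum power is allocated in both channels: Σ_{k=1}^K tr(Q_k) = Σ_{k=1}^K tr(P_k). -/

import Mathlib

open Matrix BigOperators ComplexOrder

noncomputable section

/-- A diagonal complex matrix built from a real vector. -/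
def diagC {n : ℕ} (v : Fin n → ℝ) : Matrix (Fin n) (Fin n) ℂ :=
  Matrix.diagonal (fun i => (v i : ℂ))

/-- The multiuser MIMO setup: `K` users, `N` BS antennas, per-user antenna counts `M k`,
symbol counts `S k`, estimated channels `H k`, transmit/receive filters `G k`, `U k` with
unit-norm columns, invertible real diagonal scaling factors `α k`, Hermitian positive
semidefinite antenna correlation matrices `Rb k`, `Rm k`, channel estimation error variances
`σe2 k ≥ 0` and noise variance `σ2 > 0`. -/
structure MIMOSetup (K N : ℕ) where
  M : Fin K → ℕ
  S : Fin K → ℕ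
  hM : ∀ k, 0 < M k
  hS : ∀ k, 0 < S k
  H : ∀ k : Fin K, Matrix (Fin N) (Fin (M k)) ℂ
  G : ∀ k : Fin K, Matrix (Fin N) (Fin (S k)) ℂ
  U : ∀ k : Fin K, Matrix (Fin (M k)) (Fin (S k)) ℂ
  α : ∀ k : Fin K, Fin (S k) → ℝ
  Rb : Fin K → Matrix (Fin N) (Fin N) ℂ
  Rm : ∀ k : Fin K, Matrix (Fin (M k)) (Fin (M k)) ℂ
  σe2 : Fin K → ℝ
  σ2 : ℝ
  hG : ∀ k i, ((G k)ᴴ * G k) i i = 1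
  hU : ∀ k i, ((U k)ᴴ * U k) i i = 1
  hα : ∀ k i, α k i ≠ 0
  hRb : ∀ k, (Rb k).PosSemidef
  hRm : ∀ k, (Rm k).PosSemidef
  hσe2 : ∀ k, 0 ≤ σe2 k
  hσ2 : 0 < σ2

namespace MIMOSetup

variable {K N : ℕ} (s : MIMOSetup K N)

/-- `α_k` as a diagonal complex matrix. -/
def αM (k : Fin K) : Matrix (Fin (s.S k)) (Fin (s.S k)) ℂ := diagC (s.α k)

/-- `Γ_k^{DL}` for downlink power allocations `P`. -/
def GammaDL (P : ∀ k : Fin K, Matrix (Fin (s.S k)) (Fin (s.S k)) ℂ) (k : Fin K) :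
    Matrix (Fin (s.M k)) (Fin (s.M k)) ℂ :=
  (s.H k)ᴴ * (∑ i, s.G i * P i * (s.G i)ᴴ) * s.H k
    + ((s.σe2 k : ℂ) * (s.Rb k * ∑ i, s.G i * P i * (s.G i)ᴴ).trace) • s.Rm k
    + (s.σ2 : ℂ) • 1

/-- `Γ_c` for uplink power allocations `Q`. -/
def GammaC (Q : ∀ k : Fin K, Matrix (Fin (s.S k)) (Fin (s.S k)) ℂ) :
    Matrix (Fin N) (Fin N) ℂ :=
  (∑ i, (s.H i * s.U i * Q i * (s.U i)ᴴ * (s.H i)ᴴ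
    + ((s.σe2 i : ℂ) * (s.Rm i * (s.U i * Q i * (s.U i)ᴴ)).trace) • s.Rb i))
    + (s.σ2 : ℂ) • 1

/-- The `k`-th user downlink AMSE `ξ̄_k^{DL}`. -/
def xiDLk (P : ∀ k : Fin K, Matrix (Fin (s.S k)) (Fin (s.S k)) ℂ) (k : Fin K) : ℝ :=
  (s.S k : ℝ) + (((P k)⁻¹ * (s.αM k) ^ 2 * (s.U k)ᴴ * s.GammaDL P k * s.U k).trace).re
    - 2 * ((((s.G k)ᴴ * s.H k * s.U k * s.αM k).trace).re)

/-- The `k`-th user uplink AMSE `ξ̄_k^{UL}`. -/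
def xiULk (Q : ∀ k : Fin K, Matrix (Fin (s.S k)) (Fin (s.S k)) ℂ) (k : Fin K) : ℝ :=
  (s.S k : ℝ) + (((Q k)⁻¹ * (s.αM k) ^ 2 * (s.G k)ᴴ * s.GammaC Q * s.G k).trace).re
    - 2 * (((s.αM k * (s.G k)ᴴ * s.H k * s.U k).trace).re)

/-- Downlink sum AMSE `ξ̄^{DL}`. -/
def xiDL (P : ∀ k : Fin K, Matrix (Fin (s.S k)) (Fin (s.S k)) ℂ) : ℝ := ∑ k, s.xiDLk P k

/-- Uplink sum AMSE `ξ̄^{UL}`. -/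
def xiUL (Q : ∀ k : Fin K, Matrix (Fin (s.S k)) (Fin (s.S k)) ℂ) : ℝ := ∑ k, s.xiULk Q k

end MIMOSetup

namespace AMSEAux

lemma diagC_mul {n : ℕ} (v w : Fin n → ℝ) :
    diagC v * diagC w = diagC (fun i => v i * w i) := by
  unfold diagC; rw [Matrix.diagonal_mul_diagonal]; congr 1; funext i; push_cast; ring

lemma diagC_sq {n : ℕ} (v : Fin n → ℝ) : diagC v ^ 2 = diagC (fun i => v i ^ 2) := by
  rw [sq, diagC_mul]; congr 1; funext i; ring

lemma smul_diagC {n : ℕ} (r : ℝ) (v : Fin n → ℝ) :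
    (r : ℂ) • diagC v = diagC (fun i => r * v i) := by
  ext i j
  by_cases h : i = j <;> simp [diagC, Matrix.diagonal_apply, h]

lemma diagC_inv {n : ℕ} (v : Fin n → ℝ) (h : ∀ i, v i ≠ 0) :
    (diagC v)⁻¹ = diagC (fun i => (v i)⁻¹) := by
  apply Matrix.inv_eq_right_inv
  rw [diagC_mul]
  have : (fun i => v i * (v i)⁻¹) = fun _ => (1 : ℝ) := by
    funext i; exact mul_inv_cancel₀ (h i)
  rw [this]
  unfold diagC
  simp [Matrix.diagonal_one]

lemma trace_diagC {n : ℕ} (v : Fin n → ℝ) : (diagC v).trace = ∑ i, (v i : ℂ) := by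
  simp [diagC, Matrix.trace_diagonal]

lemma trace_diagC_mul {n : ℕ} (v : Fin n → ℝ) (M : Matrix (Fin n) (Fin n) ℂ) :
    (diagC v * M).trace = ∑ i, (v i : ℂ) * M i i := by
  simp [Matrix.trace, Matrix.diag, diagC, Matrix.diagonal_mul]

lemma trace_sandwich {p n : ℕ} {ι : Type*} (t : Finset ι)
    (X : Matrix (Fin p) (Fin n) ℂ) (Y : Matrix (Fin n) (Fin p) ℂ)
    (f : ι → Matrix (Fin n) (Fin n) ℂ) (c : ℂ) :
    (X * ((∑ i ∈ t, f i) + c • (1 : Matrix (Fin n) (Fin n) ℂ)) * Y).trace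
      = (∑ i ∈ t, (X * f i * Y).trace) + c * (X * Y).trace := by
  simp [Matrix.mul_add, Matrix.add_mul, Matrix.mul_sum, Matrix.sum_mul,
    Matrix.trace_add, Matrix.trace_sum, Matrix.mul_smul, Matrix.smul_mul,
    Matrix.trace_smul, Matrix.mul_one, smul_eq_mul]

lemma trace_mul_add_smul {p n : ℕ} (X : Matrix (Fin p) (Fin n) ℂ)
    (Y : Matrix (Fin n) (Fin p) ℂ) (A B : Matrix (Fin n) (Fin n) ℂ) (e : ℂ) :
    (X * (A + e • B) * Y).trace = (X * A * Y).trace + e * (X * B * Y).trace := by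
  simp [Matrix.mul_add, Matrix.add_mul, Matrix.trace_add, Matrix.mul_smul,
    Matrix.smul_mul, Matrix.trace_smul, smul_eq_mul]

lemma trace_mul_gamma3 {p n : ℕ} (X : Matrix (Fin p) (Fin n) ℂ)
    (Y : Matrix (Fin n) (Fin p) ℂ) (A R : Matrix (Fin n) (Fin n) ℂ) (c d : ℂ) :
    (X * (A + c • R + d • (1 : Matrix (Fin n) (Fin n) ℂ)) * Y).trace
      = (X * A * Y).trace + c * (X * R * Y).trace + d * (X * Y).trace := by
  simp [Matrix.mul_add, Matrix.add_mul, Matrix.trace_add, Matrix.mul_smul,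
    Matrix.smul_mul, Matrix.trace_smul, Matrix.mul_one, smul_eq_mul]

lemma trace_conj_sum {p m n : ℕ} {ι : Type*} (t : Finset ι)
    (X : Matrix (Fin p) (Fin m) ℂ) (Y : Matrix (Fin m) (Fin p) ℂ)
    (L : Matrix (Fin m) (Fin n) ℂ) (Rr : Matrix (Fin n) (Fin m) ℂ)
    (f : ι → Matrix (Fin n) (Fin n) ℂ) :
    (X * (L * (∑ i ∈ t, f i) * Rr) * Y).trace
      = ∑ i ∈ t, (X * (L * f i * Rr) * Y).trace := by
  simp [Matrix.mul_sum, Matrix.sum_mul, Matrix.trace_sum]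

end AMSEAux

/-- **Sum AMSE transfer from downlink to uplink.** Given downlink power allocations
`P_1, …, P_K`, with `β̃ = (Σ_k tr P_k) / (Σ_k Re tr (P_k⁻¹ α_k²))` and uplink power
allocations `Q_k = β̃ • α_k² P_k⁻¹`, the uplink sum AMSE equals the downlink sum AMSE and
the same sum power is allocated in both channels. -/
theorem sum_AMSE_transfer_downlink_to_uplink {K N : ℕ} (hK : 0 < K) (hN : 0 < N)
    (s : MIMOSetup K N)
    (P : ∀ k : Fin K, Fin (s.S k) → ℝ) (hP : ∀ k i, 0 < P k i)
    (βt : ℝ)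
    (hβt : βt = (∑ k, ((diagC (P k)).trace).re) /
      (∑ k, (((diagC (P k))⁻¹ * (s.αM k) ^ 2).trace).re))
    (Q : ∀ k : Fin K, Matrix (Fin (s.S k)) (Fin (s.S k)) ℂ)
    (hQ : ∀ k, Q k = (βt : ℂ) • ((s.αM k) ^ 2 * (diagC (P k))⁻¹)) :
    s.xiUL Q = s.xiDL (fun k => diagC (P k)) ∧
      ∑ k, (Q k).trace = ∑ k, (diagC (P k)).trace := by
  classical
  haveI : Nonempty (Fin K) := Fin.pos_iff_nonempty.mp hK
  have hPne : ∀ k (i : Fin (s.S k)), P k i ≠ 0 := fun k i => (hP k i).ne'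
  have hαM : ∀ k, s.αM k = diagC (s.α k) := fun _ => rfl
  -- V_k := Pd_k⁻¹ αM_k² as an explicit diagonal matrix
  have h1 : ∀ k, (diagC (P k))⁻¹ * s.αM k ^ 2
      = diagC (fun i => s.α k i ^ 2 * (P k i)⁻¹) := by
    intro k
    rw [AMSEAux.diagC_inv (P k) (hPne k), hαM, AMSEAux.diagC_sq, AMSEAux.diagC_mul]
    exact congrArg diagC (funext fun i => mul_comm _ _)
  have hDenk : ∀ k, (((diagC (P k))⁻¹ * s.αM k ^ 2).trace).re
      = ∑ i, s.α k i ^ 2 * (P k i)⁻¹ := by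
    intro k; rw [h1 k, AMSEAux.trace_diagC]
    simp [Complex.re_sum, ← Complex.ofReal_pow]
  have hNumk : ∀ k, ((diagC (P k)).trace).re = ∑ i, P k i := by
    intro k; rw [AMSEAux.trace_diagC]; simp [Complex.re_sum]
  have hβt' : βt = (∑ k, ∑ i, P k i) / (∑ k, ∑ i, s.α k i ^ 2 * (P k i)⁻¹) := by
    rw [hβt]
    congr 1
    · exact Finset.sum_congr rfl fun k _ => hNumk k
    · exact Finset.sum_congr rfl fun k _ => hDenk k
  have hSne : ∀ k : Fin K, Nonempty (Fin (s.S k)) := fun k =>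
    Fin.pos_iff_nonempty.mp (s.hS k)
  have hDen_pos : 0 < ∑ k, ∑ i, s.α k i ^ 2 * (P k i)⁻¹ := by
    apply Finset.sum_pos _ Finset.univ_nonempty
    intro k _
    haveI := hSne k
    apply Finset.sum_pos _ Finset.univ_nonempty
    intro i _
    have h2 := s.hα k i
    have h3 := hP k i
    positivity
  have hNum_pos : 0 < ∑ k, ∑ i, P k i := by
    apply Finset.sum_pos _ Finset.univ_nonempty
    intro k _
    haveI := hSne k
    exact Finset.sum_pos (fun i _ => hP k i) Finset.univ_nonempty
  have hβt_pos : 0 < βt := hβt' ▸ div_pos hNum_pos hDen_pos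
  have hβne : βt ≠ 0 := hβt_pos.ne'
  have hβneC : (βt : ℂ) ≠ 0 := by exact_mod_cast hβne
  have hkey : βt * (∑ k, ∑ i, s.α k i ^ 2 * (P k i)⁻¹) = ∑ k, ∑ i, P k i := by
    rw [hβt']
    exact div_mul_cancel₀ _ hDen_pos.ne'
  -- explicit diagonal forms for Q and (Q)⁻¹ αM²
  have hQd : ∀ k, Q k = diagC (fun i => βt * (s.α k i ^ 2 * (P k i)⁻¹)) := by
    intro k
    rw [hQ k, hαM, AMSEAux.diagC_sq, AMSEAux.diagC_inv (P k) (hPne k),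
      AMSEAux.diagC_mul, AMSEAux.smul_diagC]
  have hQs : ∀ k, Q k = (βt : ℂ) • diagC (fun i => s.α k i ^ 2 * (P k i)⁻¹) := by
    intro k; rw [hQd k, AMSEAux.smul_diagC]
  have hW : ∀ k, (Q k)⁻¹ * s.αM k ^ 2 = diagC (fun i => βt⁻¹ * P k i) := by
    intro k
    rw [hQd k, AMSEAux.diagC_inv _ (fun i =>
        mul_ne_zero hβne (mul_ne_zero (pow_ne_zero 2 (s.hα k i)) (inv_ne_zero (hPne k i)))),
      hαM, AMSEAux.diagC_sq, AMSEAux.diagC_mul]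
    exact congrArg diagC (funext fun i => by
      field_simp [pow_ne_zero 2 (s.hα k i), hPne k i, hβne]
      ring_nf
      exact mul_inv_cancel₀ (s.hα k i))
  have hWs : ∀ k, diagC (fun i => βt⁻¹ * P k i) = (βt : ℂ)⁻¹ • diagC (P k) := by
    intro k
    rw [show ((βt : ℂ))⁻¹ = ((βt⁻¹ : ℝ) : ℂ) by push_cast; ring, AMSEAux.smul_diagC]
  -- per-user expansion of the uplink quadratic term
  have hL : ∀ k, (((Q k)⁻¹ * s.αM k ^ 2 * (s.G k)ᴴ * s.GammaC Q * s.G k).trace)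
      = (∑ i, ((diagC (fun j => βt⁻¹ * P k j) * (s.G k)ᴴ
              * (s.H i * s.U i * Q i * (s.U i)ᴴ * (s.H i)ᴴ) * s.G k).trace
          + ((s.σe2 i : ℂ) * (s.Rm i * (s.U i * Q i * (s.U i)ᴴ)).trace)
              * (diagC (fun j => βt⁻¹ * P k j) * (s.G k)ᴴ * s.Rb i * s.G k).trace))
        + (s.σ2 : ℂ) * (diagC (fun j => βt⁻¹ * P k j) * (s.G k)ᴴ * s.G k).trace := by
    intro k
    rw [hW k]
    unfold MIMOSetup.GammaC
    rw [AMSEAux.trace_sandwich]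
    congr 1
    exact Finset.sum_congr rfl fun i _ => AMSEAux.trace_mul_add_smul _ _ _ _ _
  -- per-user expansion of the downlink quadratic term
  have hR : ∀ k, (((diagC (P k))⁻¹ * s.αM k ^ 2 * (s.U k)ᴴ
          * s.GammaDL (fun k => diagC (P k)) k * s.U k).trace)
      = (∑ i, (diagC (fun j => s.α k j ^ 2 * (P k j)⁻¹) * (s.U k)ᴴ
              * ((s.H k)ᴴ * (s.G i * diagC (P i) * (s.G i)ᴴ) * s.H k) * s.U k).trace)
        + ((s.σe2 k : ℂ) * ∑ i, (s.Rb k * (s.G i * diagC (P i) * (s.G i)ᴴ)).trace)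
            * (diagC (fun j => s.α k j ^ 2 * (P k j)⁻¹) * (s.U k)ᴴ * s.Rm k * s.U k).trace
        + (s.σ2 : ℂ) * (diagC (fun j => s.α k j ^ 2 * (P k j)⁻¹) * (s.U k)ᴴ * s.U k).trace := by
    intro k
    rw [h1 k]
    unfold MIMOSetup.GammaDL
    rw [AMSEAux.trace_mul_gamma3, AMSEAux.trace_conj_sum, Matrix.mul_sum,
      Matrix.trace_sum]
  -- the three pieces
  have E1 : (∑ k, ∑ i, (diagC (fun j => βt⁻¹ * P k j) * (s.G k)ᴴ
          * (s.H i * s.U i * Q i * (s.U i)ᴴ * (s.H i)ᴴ) * s.G k).trace)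
      = ∑ k, ∑ i, (diagC (fun j => s.α k j ^ 2 * (P k j)⁻¹) * (s.U k)ᴴ
          * ((s.H k)ᴴ * (s.G i * diagC (P i) * (s.G i)ᴴ) * s.H k) * s.U k).trace := by
    rw [Finset.sum_comm]
    refine Finset.sum_congr rfl fun k _ => Finset.sum_congr rfl fun i _ => ?_
    rw [hQs k, hWs i]
    simp only [Matrix.smul_mul, Matrix.mul_smul, Matrix.trace_smul, smul_smul,
      smul_eq_mul]
    rw [mul_inv_cancel₀ hβneC, one_mul]
    have h := Matrix.trace_mul_comm
      (diagC (P i) * (s.G i)ᴴ * s.H k * s.U k)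
      (diagC (fun j => s.α k j ^ 2 * (P k j)⁻¹) * (s.U k)ᴴ * (s.H k)ᴴ * s.G i)
    simpa only [Matrix.mul_assoc] using h
  have E2 : (∑ k, ∑ i, ((s.σe2 i : ℂ) * (s.Rm i * (s.U i * Q i * (s.U i)ᴴ)).trace)
          * (diagC (fun j => βt⁻¹ * P k j) * (s.G k)ᴴ * s.Rb i * s.G k).trace)
      = ∑ k, ((s.σe2 k : ℂ) * ∑ i, (s.Rb k * (s.G i * diagC (P i) * (s.G i)ᴴ)).trace)
          * (diagC (fun j => s.α k j ^ 2 * (P k j)⁻¹) * (s.U k)ᴴ * s.Rm k * s.U k).trace := by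
    rw [Finset.sum_comm]
    refine Finset.sum_congr rfl fun k _ => ?_
    rw [Finset.mul_sum, Finset.sum_mul]
    refine Finset.sum_congr rfl fun i _ => ?_
    rw [hQs k, hWs i]
    have cA : (s.Rm k * (s.U k * diagC (fun j => s.α k j ^ 2 * (P k j)⁻¹) * (s.U k)ᴴ)).trace
        = (diagC (fun j => s.α k j ^ 2 * (P k j)⁻¹) * (s.U k)ᴴ * s.Rm k * s.U k).trace := by
      have h := Matrix.trace_mul_comm
        (s.Rm k * s.U k)
        (diagC (fun j => s.α k j ^ 2 * (P k j)⁻¹) * (s.U k)ᴴ)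
      simpa only [Matrix.mul_assoc] using h
    have cB : (diagC (P i) * (s.G i)ᴴ * s.Rb k * s.G i).trace
        = (s.Rb k * (s.G i * diagC (P i) * (s.G i)ᴴ)).trace := by
      have h := Matrix.trace_mul_comm
        (diagC (P i) * (s.G i)ᴴ)
        (s.Rb k * s.G i)
      simpa only [Matrix.mul_assoc] using h
    simp only [Matrix.smul_mul, Matrix.mul_smul, Matrix.trace_smul, smul_smul,
      smul_eq_mul]
    rw [← cB, ← cA]
    field_simp
  have E3 : (∑ k, (diagC (fun j => βt⁻¹ * P k j) * (s.G k)ᴴ * s.G k).trace)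
      = ∑ k, (diagC (fun j => s.α k j ^ 2 * (P k j)⁻¹) * (s.U k)ᴴ * s.U k).trace := by
    have l1 : ∀ k, (diagC (fun j => βt⁻¹ * P k j) * (s.G k)ᴴ * s.G k).trace
        = ∑ i, ((βt⁻¹ * P k i : ℝ) : ℂ) := by
      intro k
      rw [Matrix.mul_assoc, AMSEAux.trace_diagC_mul]
      exact Finset.sum_congr rfl fun i _ => by rw [s.hG k i, mul_one]
    have l2 : ∀ k, (diagC (fun j => s.α k j ^ 2 * (P k j)⁻¹) * (s.U k)ᴴ * s.U k).trace
        = ∑ i, ((s.α k i ^ 2 * (P k i)⁻¹ : ℝ) : ℂ) := by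
      intro k
      rw [Matrix.mul_assoc, AMSEAux.trace_diagC_mul]
      exact Finset.sum_congr rfl fun i _ => by rw [s.hU k i, mul_one]
    rw [Finset.sum_congr rfl fun k _ => l1 k, Finset.sum_congr rfl fun k _ => l2 k]
    have hreal : (∑ k, ∑ i, βt⁻¹ * P k i) = ∑ k, ∑ i, s.α k i ^ 2 * (P k i)⁻¹ := by
      simp only [← Finset.mul_sum]
      rw [← hkey, inv_mul_cancel_left₀ hβne]
    push_cast
    exact_mod_cast congrArg (fun x : ℝ => (x : ℂ)) hreal
  -- main quadratic identity over ℂ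
  have hquad : (∑ k, (((Q k)⁻¹ * s.αM k ^ 2 * (s.G k)ᴴ * s.GammaC Q * s.G k).trace))
      = ∑ k, (((diagC (P k))⁻¹ * s.αM k ^ 2 * (s.U k)ᴴ
          * s.GammaDL (fun k => diagC (P k)) k * s.U k).trace) := by
    rw [Finset.sum_congr rfl fun k _ => hL k, Finset.sum_congr rfl fun k _ => hR k]
    simp only [Finset.sum_add_distrib, ← Finset.mul_sum]
    rw [E1, E2, E3]
  -- linear terms
  have hlin : ∀ k, ((s.αM k * (s.G k)ᴴ * s.H k * s.U k).trace)
      = (((s.G k)ᴴ * s.H k * s.U k * s.αM k).trace) := by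
    intro k
    have h := Matrix.trace_mul_comm (s.αM k) ((s.G k)ᴴ * s.H k * s.U k)
    simpa only [Matrix.mul_assoc] using h
  constructor
  · unfold MIMOSetup.xiUL MIMOSetup.xiDL MIMOSetup.xiULk MIMOSetup.xiDLk
    simp only [Finset.sum_sub_distrib, Finset.sum_add_distrib]
    congr 1
    · congr 1
      rw [← Complex.re_sum, ← Complex.re_sum, hquad]
    · exact Finset.sum_congr rfl fun k _ => by rw [hlin k]
  · have hQt : ∀ k, (Q k).trace = ∑ i, ((βt * (s.α k i ^ 2 * (P k i)⁻¹) : ℝ) : ℂ) :=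
      fun k => by rw [hQd k, AMSEAux.trace_diagC]
    rw [Finset.sum_congr rfl fun k _ => hQt k,
      Finset.sum_congr rfl fun k _ => AMSEAux.trace_diagC (P k)]
    have : (∑ k, ∑ i, βt * (s.α k i ^ 2 * (P k i)⁻¹)) = ∑ k, ∑ i, P k i := by
      simp only [← Finset.mul_sum]
      exact hkey
    exact_mod_cast congrArg (fun x : ℝ => (x : ℂ)) this
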